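/- Let C ⊆ {0,1}ⁿ be a neural code and U = {U_1,…,U_n} open subsets of a topological space X with C = C(U). If x_σ·∏_{i∈τ}(1 − x_i) ∈ CF(J_C) for nonempty disjoint σ, τ ⊆ {1,…,n}, then U_σ ⊆ ⋃_{i∈τ} U_i, and moreover U_γ ⊄ ⋃_{i∈τ} U_i for every proper subset γ ⊊ σ, and U_σ ⊄ ⋃_{i∈γ} U_i for every proper subset γ ⊊ τ. -/

import Mathlib

open MvPolynomial

/-- The characteristic polynomial `ρ_v = ∏ i, (1 - v_i - x_i)` of a word `v ∈ {0,1}ⁿ = 𝔽₂ⁿ`. -/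
noncomputable def rho (n : ℕ) (v : Fin n → ZMod 2) : MvPolynomial (Fin n) (ZMod 2) :=
  ∏ i, (1 - C (v i) - X i)

/-- The neural ideal `J_C = ⟨ρ_v : v ∉ C⟩` of a neural code `C ⊆ {0,1}ⁿ`. -/
noncomputable def neuralIdeal (n : ℕ) (Co : Set (Fin n → ZMod 2)) :
    Ideal (MvPolynomial (Fin n) (ZMod 2)) :=
  Ideal.span { p | ∃ v, v ∉ Co ∧ p = rho n v }

/-- A pseudo-monomial: `∏_{i∈σ} x_i ∏_{j∈τ} (1 - x_j)` with `σ, τ` disjoint. -/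
def IsPseudoMonomial (n : ℕ) (f : MvPolynomial (Fin n) (ZMod 2)) : Prop :=
  ∃ σ τ : Finset (Fin n), Disjoint σ τ ∧
    f = (∏ i ∈ σ, X i) * ∏ j ∈ τ, (1 - X j)

/-- `f` is a minimal pseudo-monomial of the ideal `J`. -/
def IsMinimalPM (n : ℕ) (J : Ideal (MvPolynomial (Fin n) (ZMod 2)))
    (f : MvPolynomial (Fin n) (ZMod 2)) : Prop :=
  f ∈ J ∧ IsPseudoMonomial n f ∧
    ¬ ∃ g, IsPseudoMonomial n g ∧ g ∈ J ∧ g.totalDegree < f.totalDegree ∧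
      ∃ h, f = g * h

/-- The canonical form `CF(J)`: the set of all minimal pseudo-monomials of `J`. -/
def CF (n : ℕ) (J : Ideal (MvPolynomial (Fin n) (ZMod 2))) :
    Set (MvPolynomial (Fin n) (ZMod 2)) :=
  { f | IsMinimalPM n J f }

/-- An ideal is a pseudo-monomial ideal if it is generated by finitely many pseudo-monomials. -/
def IsPseudoMonomialIdeal (n : ℕ) (J : Ideal (MvPolynomial (Fin n) (ZMod 2))) : Prop :=
  ∃ S : Finset (MvPolynomial (Fin n) (ZMod 2)),
    (∀ f ∈ S, IsPseudoMonomial n f) ∧ J = Ideal.span (S : Set (MvPolynomial (Fin n) (ZMod 2)))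

/-- A polynomial is square-free if every variable occurs with exponent at most 1
in every monomial of its support. -/
def IsSquareFreePoly (n : ℕ) (f : MvPolynomial (Fin n) (ZMod 2)) : Prop :=
  ∀ m ∈ f.support, ∀ i, m i ≤ 1

/-- The Boolean ideal `B = ⟨x_i (1 - x_i) : 1 ≤ i ≤ n⟩`. -/
noncomputable def boolIdeal (n : ℕ) : Ideal (MvPolynomial (Fin n) (ZMod 2)) :=
  Ideal.span { p | ∃ i : Fin n, p = X i * (1 - X i) }

/-- The square-free representative `h_R` of `h` modulo the Boolean ideal:
replace every exponent by its truncation at 1. -/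
noncomputable def sqReduce (n : ℕ) (h : MvPolynomial (Fin n) (ZMod 2)) :
    MvPolynomial (Fin n) (ZMod 2) :=
  ∑ m ∈ h.support,
    monomial (Finsupp.mapRange (fun e => min e 1) (by simp) m) (coeff m h)

/-- The set of reduced products `P(C,D) = {(f g)_R : f ∈ CF(J_C), g ∈ CF(J_D)}`. -/
def reducedProducts (n : ℕ) (Co D : Set (Fin n → ZMod 2)) :
    Set (MvPolynomial (Fin n) (ZMod 2)) :=
  { p | ∃ f ∈ CF n (neuralIdeal n Co), ∃ g ∈ CF n (neuralIdeal n D), p = sqReduce n (f * g) }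

/-- The set of minimal reduced products `MP(C,D)`. -/
def minReducedProducts (n : ℕ) (Co D : Set (Fin n → ZMod 2)) :
    Set (MvPolynomial (Fin n) (ZMod 2)) :=
  { h | h ∈ reducedProducts n Co D ∧ h ≠ 0 ∧
    ¬ ∃ f ∈ reducedProducts n Co D, ∃ g : MvPolynomial (Fin n) (ZMod 2),
      1 ≤ g.totalDegree ∧ h = f * g }

/-- The code `C(U)` of a cover `U = {U_1, …, U_n}` of a topological space `X`. -/
def codeOfCover {X : Type*} [TopologicalSpace X] (n : ℕ) (U : Fin n → Set X) :
    Set (Fin n → ZMod 2) :=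
  { v | ((⋂ i ∈ { i : Fin n | v i = 1 }, U i) \ ⋃ j ∈ { j : Fin n | v j = 0 }, U j).Nonempty }
section Aux
variable {n : ℕ}

noncomputable def indic (s : Finset (Fin n)) : (Fin n) →₀ ℕ := ∑ i ∈ s, Finsupp.single i 1

lemma indic_apply (s : Finset (Fin n)) (j : Fin n) : indic s j = if j ∈ s then 1 else 0 := by
  classical
  rw [indic, Finsupp.finset_sum_apply]
  simp [Finsupp.single_apply, Finset.sum_ite_eq', eq_comm]

lemma indic_union {s t : Finset (Fin n)} (h : Disjoint s t) : indic (s ∪ t) = indic s + indic t := by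
  rw [indic, indic, indic, Finset.sum_union h]

lemma indic_sum (s : Finset (Fin n)) : (indic s).sum (fun _ e => e) = s.card := by
  classical
  induction s using Finset.induction_on with
  | empty => simp [indic]
  | insert _ _ hx ih =>
    rename_i a s
    rw [show insert a s = {a} ∪ s from rfl, indic_union (by simpa using hx)]
    rw [Finsupp.sum_add_index' (fun _ => rfl) (fun _ _ _ => rfl)]
    rw [ih, show indic {a} = Finsupp.single a 1 by simp [indic],
      Finsupp.sum_single_index rfl, Finset.card_union_of_disjoint (by simpa using hx)]
    simp

lemma prodX (s : Finset (Fin n)) :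
    (∏ i ∈ s, X i : MvPolynomial (Fin n) (ZMod 2)) = monomial (indic s) 1 := by
  classical
  induction s using Finset.induction_on with
  | empty => simp [indic]
  | insert _ _ hx ih =>
    rename_i a s
    rw [Finset.prod_insert hx, ih, show insert a s = {a} ∪ s from rfl,
      indic_union (by simpa using hx)]
    rw [X, monomial_mul, one_mul]
    congr 1
    simp [indic]

lemma pm_coeff_top {σ τ : Finset (Fin n)} (hστ : Disjoint σ τ) :
    coeff (indic (σ ∪ τ)) ((∏ i ∈ σ, X i) * ∏ j ∈ τ, (1 - X j) : MvPolynomial (Fin n) (ZMod 2)) = 1 := by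
  classical
  have h2 : ∀ j : Fin n, (1 - X j : MvPolynomial (Fin n) (ZMod 2)) = 1 + X j := by
    intro j; rw [CharTwo.sub_eq_add]
  simp only [h2]
  rw [Finset.prod_add, Finset.mul_sum]
  have hterm : ∀ t ∈ τ.powerset,
      ((∏ i ∈ σ, X i) * ((∏ i ∈ t, (1:MvPolynomial (Fin n) (ZMod 2))) * ∏ i ∈ τ \ t, X i))
        = monomial (indic (σ ∪ (τ \ t))) 1 := by
    intro t ht
    rw [Finset.prod_const_one, one_mul, prodX, prodX, monomial_mul, one_mul,
      indic_union (hστ.mono_right (Finset.sdiff_subset))]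
  rw [Finset.sum_congr rfl hterm]
  simp only [coeff_sum, coeff_monomial]
  rw [Finset.sum_eq_single ∅]
  · simp
  · intro t ht hne
    rw [if_neg]
    intro heq
    obtain ⟨j, hj⟩ := Finset.nonempty_iff_ne_empty.mpr hne
    have htτ := Finset.mem_powerset.mp ht
    have h1 : indic (σ ∪ τ \ t) j = 0 := by
      rw [indic_apply, if_neg]
      simp only [Finset.mem_union, Finset.mem_sdiff, not_or]
      exact ⟨fun hjσ => Finset.disjoint_left.mp hστ hjσ (htτ hj), fun h => h.2 hj⟩
    have h2' : indic (σ ∪ τ) j = 1 := by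
      rw [indic_apply, if_pos (Finset.mem_union_right _ (htτ hj))]
    rw [heq, h2'] at h1
    exact one_ne_zero h1
  · intro h; exact absurd (Finset.empty_mem_powerset τ) h

lemma pm_totalDegree {σ τ : Finset (Fin n)} (hστ : Disjoint σ τ) :
    ((∏ i ∈ σ, X i) * ∏ j ∈ τ, (1 - X j) : MvPolynomial (Fin n) (ZMod 2)).totalDegree
      = σ.card + τ.card := by
  classical
  apply le_antisymm
  · calc ((∏ i ∈ σ, X i) * ∏ j ∈ τ, (1 - X j) : MvPolynomial (Fin n) (ZMod 2)).totalDegree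
        ≤ (∏ i ∈ σ, X i : MvPolynomial (Fin n) (ZMod 2)).totalDegree
          + (∏ j ∈ τ, (1 - X j) : MvPolynomial (Fin n) (ZMod 2)).totalDegree :=
          totalDegree_mul _ _
      _ ≤ σ.card + τ.card := by
          gcongr
          · exact (totalDegree_finset_prod _ _).trans (by simp [totalDegree_X])
          · refine (totalDegree_finset_prod _ _).trans ?_
            refine le_trans (Finset.sum_le_card_nsmul _ _ 1 ?_) (by simp)
            intro j _
            rw [CharTwo.sub_eq_add]
            exact (totalDegree_add _ _).trans (by simp [totalDegree_X])
  · have hc := pm_coeff_top hστ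
    have hsupp : indic (σ ∪ τ) ∈ ((∏ i ∈ σ, X i) * ∏ j ∈ τ, (1 - X j) : MvPolynomial (Fin n) (ZMod 2)).support := by
      rw [mem_support_iff, hc]; exact one_ne_zero
    have := le_totalDegree hsupp
    rwa [indic_sum, Finset.card_union_of_disjoint hστ] at this


lemma eval_mem_neuralIdeal {Co : Set (Fin n → ZMod 2)} {p : MvPolynomial (Fin n) (ZMod 2)}
    (hp : p ∈ neuralIdeal n Co) {v : Fin n → ZMod 2} (hv : v ∈ Co) : eval v p = 0 := by
  have hle : neuralIdeal n Co ≤ RingHom.ker (eval v) := by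
    rw [neuralIdeal, Ideal.span_le]
    rintro q ⟨w, hw, rfl⟩
    have hvw : v ≠ w := fun h => hw (h ▸ hv)
    obtain ⟨i, hi⟩ := Function.ne_iff.mp hvw
    simp only [SetLike.mem_coe, RingHom.mem_ker, rho, map_prod]
    apply Finset.prod_eq_zero (Finset.mem_univ i)
    have key : ∀ a b : ZMod 2, a ≠ b → 1 - b - a = 0 := by decide
    simp only [map_sub, eval_C, eval_X, map_one]
    exact key _ _ hi
  exact hle hp

lemma pm_mem_neuralIdeal {Co : Set (Fin n → ZMod 2)} {σ τ : Finset (Fin n)}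
    (hστ : Disjoint σ τ)
    (hC : ∀ v ∈ Co, ¬((∀ i ∈ σ, v i = 1) ∧ (∀ j ∈ τ, v j = 0))) :
    ((∏ i ∈ σ, X i) * ∏ j ∈ τ, (1 - X j) : MvPolynomial (Fin n) (ZMod 2))
      ∈ neuralIdeal n Co := by
  classical
  set t : Fin n → Finset (ZMod 2) :=
    fun i => if i ∈ σ then {1} else if i ∈ τ then {0} else Finset.univ with ht
  have key : ((∏ i ∈ σ, X i) * ∏ j ∈ τ, (1 - X j) : MvPolynomial (Fin n) (ZMod 2))
      = ∑ p ∈ Fintype.piFinset t, rho n p := by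
    simp only [rho]
    rw [show (∑ x ∈ Fintype.piFinset t, ∏ i, (1 - C (x i) - X i) : MvPolynomial (Fin n) (ZMod 2))
        = ∏ i, ∑ a ∈ t i, (1 - C a - X i) from (Finset.prod_univ_sum t fun i a => 1 - C a - X i).symm]
    have hfac : ∀ i : Fin n, (∑ a ∈ t i, (1 - C a - X i) : MvPolynomial (Fin n) (ZMod 2))
        = if i ∈ σ then X i else if i ∈ τ then 1 - X i else 1 := by
      intro i
      by_cases h1 : i ∈ σ
      · simp only [ht, if_pos h1, Finset.sum_singleton, map_one]
        rw [sub_self, zero_sub, CharTwo.neg_eq]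
      · by_cases h2 : i ∈ τ
        · simp only [ht, if_neg h1, if_pos h2, Finset.sum_singleton, map_zero, sub_zero]
        · simp only [ht, if_neg h1, if_neg h2]
          rw [show (Finset.univ : Finset (ZMod 2)) = {0, 1} by decide,
            Finset.sum_insert (by decide), Finset.sum_singleton, map_zero, map_one, sub_zero,
            sub_self, zero_sub, CharTwo.neg_eq]
          rw [CharTwo.sub_eq_add, add_assoc, CharTwo.add_self_eq_zero, add_zero]
    rw [Finset.prod_congr rfl (fun i _ => hfac i),
      ← Finset.prod_subset (Finset.subset_univ (σ ∪ τ)) (fun x _ hx => by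
        simp only [Finset.mem_union, not_or] at hx
        simp [hx.1, hx.2]),
      Finset.prod_union hστ]
    congr 1
    · exact (Finset.prod_congr rfl (fun i hi => by simp [hi])).symm
    · refine (Finset.prod_congr rfl (fun i hi => ?_)).symm
      have : i ∉ σ := Finset.disjoint_right.mp hστ hi
      simp [this, hi]
  rw [key]
  refine Ideal.sum_mem _ (fun p hp => Ideal.subset_span ⟨p, fun hpC => ?_, rfl⟩)
  have hmem := Fintype.mem_piFinset.mp hp
  refine hC p hpC ⟨fun i hi => ?_, fun j hj => ?_⟩
  · have := hmem i; rw [ht] at this; simp only [if_pos hi] at this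
    simpa using this
  · have := hmem j
    have hjσ : j ∉ σ := Finset.disjoint_right.mp hστ hj
    rw [ht] at this; simp only [if_neg hjσ, if_pos hj] at this
    simpa using this

end Aux

/-- Type 2 relations. -/
theorem stmt4 (n : ℕ) (hn : 1 ≤ n) {Ω : Type*} [TopologicalSpace Ω]
    (U : Fin n → Set Ω) (Co : Set (Fin n → ZMod 2)) (hCo : Co = codeOfCover n U)
    (σ τ : Finset (Fin n)) (hσ : σ.Nonempty) (hτ : τ.Nonempty) (hστ : Disjoint σ τ)
    (h : ((∏ i ∈ σ, X i) * ∏ i ∈ τ, (1 - X i)) ∈ CF n (neuralIdeal n Co)) :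
    (⋂ i ∈ σ, U i) ⊆ (⋃ i ∈ τ, U i) ∧
      (∀ γ ⊂ σ, ¬ (⋂ i ∈ γ, U i) ⊆ ⋃ i ∈ τ, U i) ∧
      (∀ γ ⊂ τ, ¬ (⋂ i ∈ σ, U i) ⊆ ⋃ i ∈ γ, U i) := by
  classical
  obtain ⟨hfJ, -, hmin⟩ := h
  have evalPM : ∀ (σ' τ' : Finset (Fin n)) (v : Fin n → ZMod 2),
      eval v ((∏ i ∈ σ', X i) * ∏ j ∈ τ', (1 - X j) : MvPolynomial (Fin n) (ZMod 2))
        = (∏ i ∈ σ', v i) * ∏ j ∈ τ', (1 - v j) := by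
    intro σ' τ' v
    simp [map_prod]
  have part1 : (⋂ i ∈ σ, U i) ⊆ ⋃ i ∈ τ, U i := by
    intro p hp
    by_contra hpu
    set v : Fin n → ZMod 2 := fun i => if p ∈ U i then 1 else 0 with hv
    have hv1 : ∀ i, v i = 1 ↔ p ∈ U i := by
      intro i; by_cases hpi : p ∈ U i <;> simp [hv, hpi]
    have hv0 : ∀ i, v i = 0 ↔ p ∉ U i := by
      intro i; by_cases hpi : p ∈ U i <;> simp [hv, hpi]
    have hvC : v ∈ Co := by
      rw [hCo]
      refine ⟨p, Set.mem_iInter₂.mpr fun i hi => (hv1 i).mp hi, fun hmem => ?_⟩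
      obtain ⟨j, hj0, hjU⟩ := Set.mem_iUnion₂.mp hmem
      exact ((hv0 j).mp hj0) hjU
    have h0 := eval_mem_neuralIdeal hfJ hvC
    rw [evalPM] at h0
    have hσ1 : ∀ i ∈ σ, v i = 1 := fun i hi => (hv1 i).mpr (Set.mem_iInter₂.mp hp i hi)
    have hτ0 : ∀ j ∈ τ, (1 : ZMod 2) - v j = 1 := fun j hj => by
      rw [(hv0 j).mpr fun hc => hpu (Set.mem_iUnion₂.mpr ⟨j, hj, hc⟩), sub_zero]
    rw [Finset.prod_congr rfl hσ1, Finset.prod_congr rfl hτ0] at h0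
    simp at h0
  refine ⟨part1, fun γ hγ hsub => ?_, fun γ hγ hsub => ?_⟩
  · have hγτ : Disjoint γ τ := hστ.mono_left hγ.subset
    have hgJ : ((∏ i ∈ γ, X i) * ∏ j ∈ τ, (1 - X j) : MvPolynomial (Fin n) (ZMod 2))
        ∈ neuralIdeal n Co := by
      refine pm_mem_neuralIdeal hγτ fun v hv hcon => ?_
      obtain ⟨h1, h0⟩ := hcon
      rw [hCo] at hv
      obtain ⟨q, hqin, hqout⟩ := hv
      have hqγ : q ∈ ⋂ i ∈ γ, U i :=
        Set.mem_iInter₂.mpr fun i hi => Set.mem_iInter₂.mp hqin i (h1 i hi)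
      obtain ⟨j, hjτ, hjU⟩ := Set.mem_iUnion₂.mp (hsub hqγ)
      exact hqout (Set.mem_iUnion₂.mpr ⟨j, h0 j hjτ, hjU⟩)
    refine hmin ⟨_, ⟨γ, τ, hγτ, rfl⟩, hgJ, ?_, ⟨∏ i ∈ σ \ γ, X i, ?_⟩⟩
    · rw [pm_totalDegree hγτ, pm_totalDegree hστ]
      exact Nat.add_lt_add_right (Finset.card_lt_card hγ) _
    · rw [← Finset.prod_sdiff hγ.subset]
      ring
  · have hσγ : Disjoint σ γ := hστ.mono_right hγ.subset
    have hgJ : ((∏ i ∈ σ, X i) * ∏ j ∈ γ, (1 - X j) : MvPolynomial (Fin n) (ZMod 2))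
        ∈ neuralIdeal n Co := by
      refine pm_mem_neuralIdeal hσγ fun v hv hcon => ?_
      obtain ⟨h1, h0⟩ := hcon
      rw [hCo] at hv
      obtain ⟨q, hqin, hqout⟩ := hv
      have hqσ : q ∈ ⋂ i ∈ σ, U i :=
        Set.mem_iInter₂.mpr fun i hi => Set.mem_iInter₂.mp hqin i (h1 i hi)
      obtain ⟨j, hjγ, hjU⟩ := Set.mem_iUnion₂.mp (hsub hqσ)
      exact hqout (Set.mem_iUnion₂.mpr ⟨j, h0 j hjγ, hjU⟩)
    refine hmin ⟨_, ⟨σ, γ, hσγ, rfl⟩, hgJ, ?_, ⟨∏ j ∈ τ \ γ, (1 - X j), ?_⟩⟩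
    · rw [pm_totalDegree hσγ, pm_totalDegree hστ]
      exact Nat.add_lt_add_left (Finset.card_lt_card hγ) _
    · rw [← Finset.prod_sdiff hγ.subset]
      ring
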